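/- For every real γ > 0 and every c ∈ (0, 1), ∫₀^∞ ∫₀^{x₂} exp(−x₁) · x₁ · x₂ · exp( −(c·x₂² + (1 − c)·x₁²)/(4γ²) ) dx₁ dx₂ = (4γ⁴/c) · (1 − 2γ·W(γ)). -/

import Mathlib

open MeasureTheory Real

/-- `W x = exp (x²) · ∫_x^∞ exp (−t²) dt`, i.e. `(√π/2)·erfcx x`. -/
noncomputable def W (x : ℝ) : ℝ := Real.exp (x ^ 2) * ∫ t in Set.Ioi x, Real.exp (-(t ^ 2))

open Set Filter

/-- translation invariance for integrals over `Ioi`. -/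
lemma sb_integral_comp_add_right_Ioi (f : ℝ → ℝ) (a d : ℝ) :
    ∫ x in Set.Ioi a, f (x + d) = ∫ x in Set.Ioi (a + d), f x := by
  rw [← integral_indicator measurableSet_Ioi, ← integral_indicator measurableSet_Ioi,
    ← integral_add_right_eq_self (fun x => Set.indicator (Set.Ioi (a + d)) f x) d]
  congr 1
  funext x
  simp only [Set.indicator_apply, Set.mem_Ioi, add_lt_add_iff_right]

lemma sb_integrable_mul (b : ℝ) (hb : 0 < b) :
    Integrable fun x : ℝ => x * Real.exp (-(b * x ^ 2)) := by
  simpa [neg_mul] using integrable_mul_exp_neg_mul_sq hb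

/-- Gaussian tail integral. -/
lemma sb_gauss_tail {b : ℝ} (hb : 0 < b) (x : ℝ) :
    ∫ t in Set.Ioi x, t * Real.exp (-(b * t ^ 2)) = Real.exp (-(b * x ^ 2)) / (2 * b) := by
  have hderiv : ∀ t ∈ Set.Ici x, HasDerivAt (fun t => -Real.exp (-(b * t ^ 2)) / (2 * b))
      (t * Real.exp (-(b * t ^ 2))) t := by
    intro t _
    have h1 : HasDerivAt (fun t : ℝ => -(b * t ^ 2)) (-(b * (2 * t))) t := by
      have := ((hasDerivAt_pow 2 t).const_mul b).neg
      simp at this; exact this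
    have h2 := (h1.exp).neg.div_const (2 * b)
    refine h2.congr_deriv ?_
    field_simp
  have hint : IntegrableOn (fun t => t * Real.exp (-(b * t ^ 2))) (Set.Ioi x) :=
    (sb_integrable_mul b hb).integrableOn
  have htend : Tendsto (fun t => -Real.exp (-(b * t ^ 2)) / (2 * b)) atTop (nhds 0) := by
    have h1 : Tendsto (fun t : ℝ => -(b * t ^ 2)) atTop atBot := by
      have h2 : Tendsto (fun t : ℝ => b * t ^ 2) atTop atTop :=
        (tendsto_pow_atTop (by norm_num : 2 ≠ 0)).const_mul_atTop hb
      exact tendsto_neg_atTop_atBot.comp h2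
    have := ((Real.tendsto_exp_atBot.comp h1).neg).div_const (2 * b)
    simpa using this
  have := integral_Ioi_of_hasDerivAt_of_tendsto' hderiv hint htend
  rw [this]
  ring

lemma sb_int_aux1 (b : ℝ) (hb : 0 < b) :
    IntegrableOn (fun x => x * Real.exp (-(b * x ^ 2) - x)) (Set.Ioi (0:ℝ)) := by
  refine Integrable.mono' (sb_integrable_mul b hb).integrableOn ?_ ?_
  · exact (Continuous.aestronglyMeasurable (by fun_prop))
  · filter_upwards [ae_restrict_mem measurableSet_Ioi] with x hx
    have hx0 : (0:ℝ) < x := hx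
    rw [Real.norm_eq_abs, abs_mul, abs_of_pos hx0, abs_of_pos (Real.exp_pos _)]
    have hle : Real.exp (-(b * x ^ 2) - x) ≤ Real.exp (-(b * x ^ 2)) :=
      Real.exp_le_exp.mpr (by linarith)
    exact mul_le_mul_of_nonneg_left hle hx0.le

lemma sb_int_aux0 (b : ℝ) (hb : 0 < b) :
    IntegrableOn (fun x => Real.exp (-(b * x ^ 2) - x)) (Set.Ioi (0:ℝ)) := by
  refine Integrable.mono' (integrable_exp_neg_mul_sq hb).integrableOn ?_ ?_
  · exact (Continuous.aestronglyMeasurable (by fun_prop))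
  · filter_upwards [ae_restrict_mem measurableSet_Ioi] with x hx
    have hx0 : (0:ℝ) < x := hx
    rw [Real.norm_eq_abs, abs_of_pos (Real.exp_pos _)]
    have : Real.exp (-(b * x ^ 2) - x) ≤ Real.exp (-(b * x ^ 2)) :=
      Real.exp_le_exp.mpr (by linarith)
    simpa [neg_mul] using this

/-- the exponential integral `∫₀^∞ e^{-x²/(4γ²) - x} dx = 2γ W(γ)`. -/
lemma sb_I_val (γ : ℝ) (hγ : 0 < γ) :
    ∫ x in Set.Ioi (0:ℝ), Real.exp (-((4 * γ ^ 2)⁻¹ * x ^ 2) - x) = 2 * γ * W γ := by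
  have hγ2 : (γ:ℝ) ≠ 0 := hγ.ne'
  have key : ∀ x : ℝ, Real.exp (-((4 * γ ^ 2)⁻¹ * x ^ 2) - x)
      = Real.exp (γ ^ 2) * Real.exp (-(((2 * γ)⁻¹ * x + γ) ^ 2)) := by
    intro x
    rw [← Real.exp_add]
    congr 1
    field_simp
    ring
  simp_rw [key]
  rw [integral_const_mul]
  have hb : (0:ℝ) < (2 * γ)⁻¹ := by positivity
  have h1 := integral_comp_mul_left_Ioi (fun u => Real.exp (-((u + γ) ^ 2))) 0 hb
  simp only [mul_zero, inv_inv, smul_eq_mul] at h1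
  rw [h1]
  have h2 := sb_integral_comp_add_right_Ioi (fun u => Real.exp (-(u ^ 2))) 0 γ
  simp only [zero_add] at h2
  rw [h2, W]
  ring

/-- `∫₀^∞ x e^{-x²/(4γ²) - x} dx = 2γ²(1 - 2γ W(γ))`. -/
lemma sb_J_val (γ : ℝ) (hγ : 0 < γ) :
    ∫ x in Set.Ioi (0:ℝ), x * Real.exp (-((4 * γ ^ 2)⁻¹ * x ^ 2) - x)
      = 2 * γ ^ 2 * (1 - 2 * γ * W γ) := by
  have hbpos : (0:ℝ) < (4 * γ ^ 2)⁻¹ := by positivity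
  set b : ℝ := (4 * γ ^ 2)⁻¹ with hbdef
  have hE := sb_int_aux0 b hbpos
  have hxE := sb_int_aux1 b hbpos
  have hb4 : (4 * γ ^ 2) * b = 1 := by
    rw [hbdef]; field_simp
  have hsum : ∫ x in Set.Ioi (0:ℝ), (x + 2 * γ ^ 2) * Real.exp (-(b * x ^ 2) - x)
      = 2 * γ ^ 2 := by
    have hderiv : ∀ t ∈ Set.Ici (0:ℝ),
        HasDerivAt (fun x => -(2 * γ ^ 2) * Real.exp (-(b * x ^ 2) - x))
          ((t + 2 * γ ^ 2) * Real.exp (-(b * t ^ 2) - t)) t := by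
      intro t _
      have h1 : HasDerivAt (fun x : ℝ => -(b * x ^ 2) - x) (-(b * (2 * t)) - 1) t := by
        have := (((hasDerivAt_pow 2 t).const_mul b).neg).sub (hasDerivAt_id t)
        simp at this; exact this
      have h2 := (h1.exp).const_mul (-(2 * γ ^ 2))
      refine h2.congr_deriv ?_
      have : (2:ℝ) * γ ^ 2 * (b * (2 * t)) = t := by
        have : (2:ℝ) * γ ^ 2 * (b * (2 * t)) = ((4 * γ ^ 2) * b) * t := by ring
        rw [this, hb4, one_mul]
      nlinarith [this, Real.exp_pos (-(b * t ^ 2) - t)]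
    have hint : IntegrableOn (fun t => (t + 2 * γ ^ 2) * Real.exp (-(b * t ^ 2) - t))
        (Set.Ioi (0:ℝ)) := by
      have h0 := hxE.add (hE.const_mul (2 * γ ^ 2))
      refine h0.congr (Filter.Eventually.of_forall fun x => ?_)
      simp only [Pi.add_apply]
      ring
    have htend : Tendsto (fun x => -(2 * γ ^ 2) * Real.exp (-(b * x ^ 2) - x)) atTop (nhds 0) := by
      have h1 : Tendsto (fun x : ℝ => -(b * x ^ 2) - x) atTop atBot := by
        refine tendsto_atBot_mono (f := fun x : ℝ => -x) (fun x => show -(b * x ^ 2) - x ≤ -x by nlinarith [mul_nonneg hbpos.le (sq_nonneg x)]) ?_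
        exact tendsto_neg_atTop_atBot
      have := (Real.tendsto_exp_atBot.comp h1).const_mul (-(2 * γ ^ 2))
      simpa using this
    have := integral_Ioi_of_hasDerivAt_of_tendsto' hderiv hint htend
    rw [this]
    norm_num
  have hsplit : ∫ x in Set.Ioi (0:ℝ), (x + 2 * γ ^ 2) * Real.exp (-(b * x ^ 2) - x)
      = (∫ x in Set.Ioi (0:ℝ), x * Real.exp (-(b * x ^ 2) - x))
        + 2 * γ ^ 2 * ∫ x in Set.Ioi (0:ℝ), Real.exp (-(b * x ^ 2) - x) := by
    rw [← integral_const_mul, ← integral_add hxE (hE.const_mul _)]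
    congr 1
    funext x
    ring
  have hI := sb_I_val γ hγ
  rw [hsplit, hI] at hsum
  linarith [hsum]

theorem selfblocking_marginal_term_x₁ (γ c : ℝ) (hγ : 0 < γ) (hc : c ∈ Set.Ioo (0 : ℝ) 1) :
    ∫ x₂ in Set.Ioi (0 : ℝ),
        ∫ x₁ in (0 : ℝ)..x₂,
          Real.exp (-x₁) * x₁ * x₂ *
            Real.exp (-((c * x₂ ^ 2 + (1 - c) * x₁ ^ 2) / (4 * γ ^ 2)))
      = (4 * γ ^ 4 / c) * (1 - 2 * γ * W γ) := by
  obtain ⟨hc0, hc1⟩ := hc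
  have hγ0 : (γ:ℝ) ≠ 0 := hγ.ne'
  have h4 : (0:ℝ) < 4 * γ ^ 2 := by positivity
  set b₂ : ℝ := c / (4 * γ ^ 2) with hb₂
  have hb₂pos : 0 < b₂ := by positivity
  set b₁ : ℝ := (1 - c) / (4 * γ ^ 2) with hb₁
  have hb₁pos : 0 < b₁ := by
    rw [hb₁]; exact div_pos (by linarith) h4
  set g : ℝ → ℝ := fun x => x * Real.exp (-(b₁ * x ^ 2) - x) with hg
  set h : ℝ → ℝ := fun x => x * Real.exp (-(b₂ * x ^ 2)) with hh
  have hgc : Continuous g := by rw [hg]; fun_prop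
  have hhc : Continuous h := by rw [hh]; fun_prop
  have hgi : IntegrableOn g (Set.Ioi (0:ℝ)) := sb_int_aux1 b₁ hb₁pos
  have hhi : IntegrableOn h (Set.Ioi (0:ℝ)) := (sb_integrable_mul b₂ hb₂pos).integrableOn
  -- the product function
  set F : ℝ × ℝ → ℝ := fun p => if p.2 ≤ p.1 then h p.1 * g p.2 else 0 with hF
  have hFmeas : AEStronglyMeasurable F
      ((volume.restrict (Set.Ioi (0:ℝ))).prod (volume.restrict (Set.Ioi (0:ℝ)))) := by
    have hFi : F = Set.indicator {p : ℝ × ℝ | p.2 ≤ p.1} (fun p => h p.1 * g p.2) := by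
      funext p
      simp [hF, Set.indicator_apply]
    rw [hFi]
    exact (((hhc.comp continuous_fst).mul (hgc.comp continuous_snd)).aestronglyMeasurable).indicator
      (measurableSet_le measurable_snd measurable_fst)
  have hslice : ∀ x₂ : ℝ, (fun x₁ => F (x₂, x₁))
      = Set.indicator (Set.Iic x₂) (fun x₁ => h x₂ * g x₁) := by
    intro x₂
    funext x₁
    simp [hF, Set.indicator_apply]
  have hC : (0:ℝ) ≤ ∫ x₁ in Set.Ioi (0:ℝ), |g x₁| :=
    integral_nonneg fun x₁ => abs_nonneg _
  have hFint : Integrable F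
      ((volume.restrict (Set.Ioi (0:ℝ))).prod (volume.restrict (Set.Ioi (0:ℝ)))) := by
    rw [integrable_prod_iff hFmeas]
    constructor
    · refine Eventually.of_forall fun x₂ => ?_
      rw [hslice x₂]
      exact (hgi.const_mul (h x₂)).indicator measurableSet_Iic
    · refine Integrable.mono' (hhi.abs.mul_const (∫ x₁ in Set.Ioi (0:ℝ), |g x₁|)) ?_ ?_
      · exact hFmeas.norm.integral_prod_right'
      · refine Eventually.of_forall fun x₂ => ?_
        have h1 : (∫ x₁ in Set.Ioi (0:ℝ), ‖F (x₂, x₁)‖)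
            ≤ ∫ x₁ in Set.Ioi (0:ℝ), |h x₂| * |g x₁| := by
          refine integral_mono_of_nonneg (Eventually.of_forall fun x₁ => norm_nonneg _)
            (hgi.abs.const_mul _) (Eventually.of_forall fun x₁ => ?_)
          by_cases hle : x₁ ≤ x₂
          · simp [hF, hle, abs_mul, Real.norm_eq_abs, le_refl]
          · simp only [hF, hle, if_false, norm_zero]
            positivity
        have h2 : ‖∫ x₁ in Set.Ioi (0:ℝ), ‖F (x₂, x₁)‖‖
            = ∫ x₁ in Set.Ioi (0:ℝ), ‖F (x₂, x₁)‖ :=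
          Real.norm_of_nonneg (integral_nonneg fun x₁ => norm_nonneg _)
        rw [h2]
        calc (∫ x₁ in Set.Ioi (0:ℝ), ‖F (x₂, x₁)‖)
            ≤ ∫ x₁ in Set.Ioi (0:ℝ), |h x₂| * |g x₁| := h1
          _ = |h x₂| * ∫ x₁ in Set.Ioi (0:ℝ), |g x₁| := integral_const_mul _ _
  -- Step 1: rewrite the inner interval integral
  have step1 : ∫ x₂ in Set.Ioi (0 : ℝ),
        ∫ x₁ in (0 : ℝ)..x₂,
          Real.exp (-x₁) * x₁ * x₂ *
            Real.exp (-((c * x₂ ^ 2 + (1 - c) * x₁ ^ 2) / (4 * γ ^ 2)))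
      = ∫ x₂ in Set.Ioi (0:ℝ), ∫ x₁ in Set.Ioi (0:ℝ), F (x₂, x₁) := by
    refine setIntegral_congr_fun measurableSet_Ioi fun x₂ hx₂ => ?_
    have hx₂0 : (0:ℝ) ≤ x₂ := (le_of_lt hx₂)
    rw [intervalIntegral.integral_of_le hx₂0]
    have hpt : ∀ x₁ : ℝ, Real.exp (-x₁) * x₁ * x₂ *
        Real.exp (-((c * x₂ ^ 2 + (1 - c) * x₁ ^ 2) / (4 * γ ^ 2))) = h x₂ * g x₁ := by
      intro x₁
      have e1 : Real.exp (-x₁) * x₁ * x₂ *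
          Real.exp (-((c * x₂ ^ 2 + (1 - c) * x₁ ^ 2) / (4 * γ ^ 2)))
          = x₁ * x₂ * Real.exp (-x₁ + -((c * x₂ ^ 2 + (1 - c) * x₁ ^ 2) / (4 * γ ^ 2))) := by
        rw [Real.exp_add]; ring
      have e2 : h x₂ * g x₁
          = x₁ * x₂ * Real.exp (-(b₂ * x₂ ^ 2) + (-(b₁ * x₁ ^ 2) - x₁)) := by
        rw [hh, hg, Real.exp_add]; ring
      rw [e1, e2]
      congr 1
      rw [hb₂, hb₁]
      field_simp
      ring
    rw [hslice x₂, integral_indicator measurableSet_Iic,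
      Measure.restrict_restrict measurableSet_Iic]
    have hset : Set.Iic x₂ ∩ Set.Ioi (0:ℝ) = Set.Ioc (0:ℝ) x₂ := by
      rw [Set.inter_comm, Set.Ioi_inter_Iic]
    rw [hset]
    exact setIntegral_congr_fun measurableSet_Ioc fun x₁ _ => (hpt x₁)
  rw [step1]
  -- Step 2: Fubini swap
  have hswap : (∫ x₂ in Set.Ioi (0:ℝ), ∫ x₁ in Set.Ioi (0:ℝ), F (x₂, x₁))
      = ∫ x₁ in Set.Ioi (0:ℝ), ∫ x₂ in Set.Ioi (0:ℝ), F (x₂, x₁) := by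
    exact integral_integral_swap hFint
  rw [hswap]
  -- Step 3: compute the inner (x₂) integral
  have step3 : ∫ x₁ in Set.Ioi (0:ℝ), ∫ x₂ in Set.Ioi (0:ℝ), F (x₂, x₁)
      = ∫ x₁ in Set.Ioi (0:ℝ), (2 * b₂)⁻¹ * (x₁ * Real.exp (-((4 * γ ^ 2)⁻¹ * x₁ ^ 2) - x₁)) := by
    refine setIntegral_congr_fun measurableSet_Ioi fun x₁ hx₁ => ?_
    have hx₁0 : (0:ℝ) < x₁ := hx₁
    have hslice2 : (fun x₂ => F (x₂, x₁))
        = Set.indicator (Set.Ici x₁) (fun x₂ => h x₂ * g x₁) := by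
      funext x₂
      simp [hF, Set.indicator_apply]
    rw [hslice2, integral_indicator measurableSet_Ici,
      Measure.restrict_restrict measurableSet_Ici]
    have hset : Set.Ici x₁ ∩ Set.Ioi (0:ℝ) = Set.Ici x₁ := by
      refine Set.inter_eq_left.mpr fun x hx => lt_of_lt_of_le hx₁0 hx
    rw [hset, integral_Ici_eq_integral_Ioi, integral_mul_const, hh]
    rw [sb_gauss_tail hb₂pos x₁]
    rw [hg]
    have hexp : Real.exp (-(b₂ * x₁ ^ 2)) * Real.exp (-(b₁ * x₁ ^ 2) - x₁)
        = Real.exp (-((4 * γ ^ 2)⁻¹ * x₁ ^ 2) - x₁) := by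
      rw [← Real.exp_add]
      congr 1
      rw [hb₂, hb₁]
      field_simp
      ring
    rw [div_eq_mul_inv]
    rw [← hexp]
    ring
  rw [step3, integral_const_mul, sb_J_val γ hγ]
  rw [hb₂]
  field_simp
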